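/- Suppose W : [0,∞) → ℝ is continuous and bounded with limit C₀ at infinity and ∫₁^∞ (W(ρ)−C₀)² dρ < ∞, and suppose G_m(ρ,σ) = √(ρσ) I_m(min{ρ,σ}) K_m(max{ρ,σ}) is the Green's kernel of (H₀+1)^{-1}, where I_m, K_m are modified Bessel functions. Then the kernel (W(ρ)−C₀) G_m(ρ,σ) is square integrable on (0,∞)×(0,∞), i.e., the operator (W−C₀)(H₀+1)^{-1} is Hilbert–Schmidt. -/

import Mathlib

open MeasureTheory Set

-- aux 1: sqrt * log bound
lemma aux_sqrt_log {x y : ℝ} (hx : 0 < x) (hxy : x ≤ y) (hy : y ≤ 1) :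
    Real.sqrt x * |Real.log y| ≤ 2 := by
  have hy0 : 0 < y := lt_of_lt_of_le hx hxy
  have hsy : 0 < Real.sqrt y := Real.sqrt_pos.2 hy0
  have hlog : |Real.log y| ≤ 2 / Real.sqrt y := by
    have h1 : Real.log y ≤ 0 := Real.log_nonpos (le_of_lt hy0) hy
    have h2 : Real.log ((Real.sqrt y)⁻¹) ≤ (Real.sqrt y)⁻¹ - 1 :=
      Real.log_le_sub_one_of_pos (by positivity)
    have h3 : Real.log y = 2 * Real.log (Real.sqrt y) := by
      rw [Real.log_sqrt (le_of_lt hy0)]; ring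
    have h4 : |Real.log y| = 2 * Real.log ((Real.sqrt y)⁻¹) := by
      rw [abs_of_nonpos h1, h3, Real.log_inv]; ring
    rw [h4]
    have : (Real.sqrt y)⁻¹ - 1 ≤ (Real.sqrt y)⁻¹ := by linarith
    calc 2 * Real.log ((Real.sqrt y)⁻¹) ≤ 2 * (Real.sqrt y)⁻¹ := by linarith
    _ = 2 / Real.sqrt y := by rw [div_eq_mul_inv]
  calc Real.sqrt x * |Real.log y| ≤ Real.sqrt y * (2 / Real.sqrt y) := by
        apply mul_le_mul (Real.sqrt_le_sqrt hxy) hlog (abs_nonneg _) (Real.sqrt_nonneg _)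
    _ = 2 := by field_simp

lemma aux_rpow {x y m : ℝ} (hm : 0 ≤ m) (hx : 0 < x) (hxy : x ≤ y) (hy : y ≤ 1) :
    x ^ ((1:ℝ)/2 + m) * y ^ ((1:ℝ)/2 - m) ≤ 1 := by
  have hy0 : 0 < y := lt_of_lt_of_le hx hxy
  have h1 : x ^ ((1:ℝ)/2 + m) ≤ y ^ ((1:ℝ)/2 + m) :=
    Real.rpow_le_rpow (le_of_lt hx) hxy (by linarith)
  have h2 : y ^ ((1:ℝ)/2 + m) * y ^ ((1:ℝ)/2 - m) = y := by
    rw [← Real.rpow_add hy0]; norm_num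
  calc x ^ ((1:ℝ)/2 + m) * y ^ ((1:ℝ)/2 - m)
      ≤ y ^ ((1:ℝ)/2 + m) * y ^ ((1:ℝ)/2 - m) :=
        mul_le_mul_of_nonneg_right h1 (Real.rpow_nonneg (le_of_lt hy0) _)
    _ = y := h2
    _ ≤ 1 := hy

lemma aux_exp_abs_integrable : Integrable (fun t : ℝ => Real.exp (-(2*|t|))) := by
  have hmeas : AEStronglyMeasurable (fun t : ℝ => Real.exp (-(2*|t|))) volume :=
    (Real.continuous_exp.comp (continuous_const.mul continuous_abs).neg).aestronglyMeasurable
  have h1 : IntegrableOn (fun t : ℝ => Real.exp (-(2*|t|))) (Ioi 0) := by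
    apply (exp_neg_integrableOn_Ioi 0 (by norm_num : (0:ℝ) < 2)).congr_fun ?_ measurableSet_Ioi
    intro x hx
    simp [abs_of_pos (mem_Ioi.1 hx)]
  have h2 : IntegrableOn (fun t : ℝ => Real.exp (-(2*|t|))) (Iic 0) := by
    apply Integrable.mono' (integrableOn_exp_Iic 0) (hmeas.restrict)
    filter_upwards [ae_restrict_mem measurableSet_Iic] with x hx
    rw [Real.norm_eq_abs, abs_of_pos (Real.exp_pos _)]
    apply Real.exp_le_exp.2
    rw [abs_of_nonpos (mem_Iic.1 hx)]
    have := mem_Iic.1 hx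
    linarith
  have h3 : IntegrableOn (fun t : ℝ => Real.exp (-(2*|t|))) (Iic 0 ∪ Ioi 0) := h2.union h1
  rw [Iic_union_Ioi] at h3
  rwa [← integrableOn_univ]

lemma aux_piece4 {c : ℝ → ℝ} (hc0 : ∀ x, 0 ≤ c x)
    (hc : IntegrableOn c (Ioi 1))
    (hmeas : AEStronglyMeasurable (fun p : ℝ × ℝ => c p.1 * Real.exp (-(2*|p.1 - p.2|)))
      ((volume.restrict (Ioi 1)).prod (volume.restrict (Ioi 1)))) :
    Integrable (fun p : ℝ × ℝ => c p.1 * Real.exp (-(2*|p.1 - p.2|)))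
      ((volume.restrict (Ioi 1)).prod (volume.restrict (Ioi 1))) := by
  set K : ENNReal := ∫⁻ t : ℝ, ENNReal.ofReal (Real.exp (-(2*|t|))) with hK
  have hKlt : K < ⊤ := aux_exp_abs_integrable.lintegral_lt_top
  refine ⟨hmeas, ?_⟩
  rw [hasFiniteIntegral_iff_ofReal
    (ae_of_all _ fun p => mul_nonneg (hc0 _) (Real.exp_pos _).le)]
  rw [lintegral_prod _ hmeas.aemeasurable.ennreal_ofReal]
  have hinner : ∀ ρ : ℝ, (∫⁻ σ in Ioi (1:ℝ), ENNReal.ofReal (c ρ * Real.exp (-(2*|ρ - σ|))))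
      ≤ ENNReal.ofReal (c ρ) * K := by
    intro ρ
    calc (∫⁻ σ in Ioi (1:ℝ), ENNReal.ofReal (c ρ * Real.exp (-(2*|ρ - σ|))))
        = ∫⁻ σ in Ioi (1:ℝ), ENNReal.ofReal (c ρ) * ENNReal.ofReal (Real.exp (-(2*|ρ - σ|))) := by
          simp_rw [ENNReal.ofReal_mul (hc0 ρ)]
      _ = ENNReal.ofReal (c ρ) * ∫⁻ σ in Ioi (1:ℝ), ENNReal.ofReal (Real.exp (-(2*|ρ - σ|))) :=
          lintegral_const_mul' _ _ ENNReal.ofReal_ne_top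
      _ ≤ ENNReal.ofReal (c ρ) * ∫⁻ σ, ENNReal.ofReal (Real.exp (-(2*|ρ - σ|))) :=
          mul_le_mul_right (setLIntegral_le_lintegral _ _) _
      _ = ENNReal.ofReal (c ρ) * K := by
          congr 1
          have habs : ∀ σ : ℝ, |ρ - σ| = |σ + -ρ| := by
            intro σ; rw [← sub_eq_add_neg, abs_sub_comm]
          simp_rw [habs]
          exact lintegral_add_right_eq_self (fun t => ENNReal.ofReal (Real.exp (-(2*|t|)))) (-ρ)
  calc (∫⁻ ρ in Ioi (1:ℝ), ∫⁻ σ in Ioi (1:ℝ), ENNReal.ofReal (c ρ * Real.exp (-(2*|ρ-σ|))))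
      ≤ ∫⁻ ρ in Ioi (1:ℝ), ENNReal.ofReal (c ρ) * K := lintegral_mono hinner
    _ = (∫⁻ ρ in Ioi (1:ℝ), ENNReal.ofReal (c ρ)) * K := lintegral_mul_const' K _ hKlt.ne
    _ < ⊤ := ENNReal.mul_lt_top hc.lintegral_lt_top hKlt

set_option maxHeartbeats 1000000 in
/-- the kernel `(W(ρ)−C₀) G_m(ρ,σ)` is square integrable on
`(0,∞)×(0,∞)`, i.e. `(W−C₀)(H₀+1)⁻¹` is Hilbert–Schmidt.  The Green's kernel
`G_m(ρ,σ) = √(ρσ) I_m(min) K_m(max)` is encoded through its standard bounds. -/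
theorem stmt_5 (m : ℝ) (hm : 0 ≤ m)
    (W : ℝ → ℝ) (C₀ : ℝ)
    (hWcont : ContinuousOn W (Ici (0:ℝ)))
    (hWbd : ∃ M : ℝ, ∀ ρ ≥ (0:ℝ), |W ρ| ≤ M)
    (hWlim : Filter.Tendsto W Filter.atTop (nhds C₀))
    (hWL2 : IntegrableOn (fun ρ => (W ρ - C₀)^2) (Ioi (1:ℝ)))
    (G : ℝ → ℝ → ℝ)
    (hGcont : Continuous (fun p : ℝ × ℝ => G p.1 p.2))
    (a₁ a₂ a₃ a₄ : ℝ) (ha₁ : 0 < a₁) (ha₂ : 0 < a₂) (ha₃ : 0 < a₃) (ha₄ : 0 < a₄)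
    (hG1₀ : m = 0 → ∀ ρ ∈ Ioc (0:ℝ) 1, ∀ σ ∈ Ioc (0:ℝ) 1,
      |G ρ σ| ≤ a₁ * Real.sqrt (min ρ σ) * |Real.log (max ρ σ)|)
    (hG1 : 0 < m → ∀ ρ ∈ Ioc (0:ℝ) 1, ∀ σ ∈ Ioc (0:ℝ) 1,
      |G ρ σ| ≤ a₁ * (min ρ σ) ^ ((1:ℝ)/2 + m) * (max ρ σ) ^ ((1:ℝ)/2 - m))
    (hG2 : ∀ ρ ∈ Ioc (0:ℝ) 1, ∀ σ ∈ Ioi (1:ℝ),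
      |G ρ σ| ≤ a₂ * ρ ^ ((1:ℝ)/2 + m) * Real.exp (-σ))
    (hG3 : ∀ ρ ∈ Ioi (1:ℝ), ∀ σ ∈ Ioc (0:ℝ) 1,
      |G ρ σ| ≤ a₃ * Real.exp (-ρ) * σ ^ ((1:ℝ)/2 + m))
    (hG4 : ∀ ρ ∈ Ioi (1:ℝ), ∀ σ ∈ Ioi (1:ℝ),
      |G ρ σ| ≤ a₄ * Real.exp (-|ρ - σ|)) :
    IntegrableOn (fun p : ℝ × ℝ => ((W p.1 - C₀) * G p.1 p.2)^2)
      (Ioi (0:ℝ) ×ˢ Ioi (0:ℝ)) := by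
  obtain ⟨M, hM⟩ := hWbd
  set f : ℝ × ℝ → ℝ := fun p => ((W p.1 - C₀) * G p.1 p.2)^2 with hf
  set B : ℝ := M + |C₀| with hBdef
  have hWB : ∀ ρ ≥ (0:ℝ), |W ρ - C₀| ≤ B := by
    intro ρ hρ
    have h1 := hM ρ hρ
    have h2 : |W ρ - C₀| ≤ |W ρ| + |C₀| := abs_sub _ _
    linarith
  have hB0 : 0 ≤ B := le_trans (abs_nonneg _) (hWB 0 le_rfl)
  -- continuity of f on (Ici 0) ×ˢ univ
  have hWc2 : ContinuousOn (fun p : ℝ × ℝ => W p.1 - C₀) (Ici (0:ℝ) ×ˢ (univ : Set ℝ)) :=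
    (hWcont.comp continuous_fst.continuousOn (fun p hp => hp.1)).sub continuousOn_const
  have hfc : ContinuousOn f (Ici (0:ℝ) ×ˢ (univ : Set ℝ)) :=
    (hWc2.mul hGcont.continuousOn).pow 2
  have hfm : ∀ R : Set (ℝ × ℝ), MeasurableSet R → R ⊆ Ici (0:ℝ) ×ˢ (univ : Set ℝ) →
      AEStronglyMeasurable f (volume.restrict R) :=
    fun R hRm hRs => (hfc.mono hRs).aestronglyMeasurable hRm
  have hsub1 : Ioc (0:ℝ) 1 ⊆ Ici (0:ℝ) := fun x hx => le_of_lt hx.1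
  have hsub2 : Ioi (1:ℝ) ⊆ Ici (0:ℝ) := fun x hx => mem_Ici.2 (le_of_lt (lt_trans zero_lt_one hx))
  -- measure-restriction identities for product sets
  have hrestr : ∀ s t : Set ℝ, (volume : Measure (ℝ × ℝ)).restrict (s ×ˢ t)
      = (volume.restrict s).prod (volume.restrict t) := by
    intro s t
    rw [MeasureTheory.Measure.volume_eq_prod]
    exact (Measure.prod_restrict s t).symm
  -- Region A : (0,1] × (0,1]
  have hA : IntegrableOn f (Ioc (0:ℝ) 1 ×ˢ Ioc (0:ℝ) 1) := by
    have hGb : ∀ ρ ∈ Ioc (0:ℝ) 1, ∀ σ ∈ Ioc (0:ℝ) 1, |G ρ σ| ≤ 2 * a₁ := by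
      intro ρ hρ σ hσ
      rcases eq_or_lt_of_le hm with hm0 | hm0
      · have hbd := hG1₀ hm0.symm ρ hρ σ hσ
        have hb : Real.sqrt (min ρ σ) * |Real.log (max ρ σ)| ≤ 2 :=
          aux_sqrt_log (lt_min hρ.1 hσ.1) min_le_max (max_le hρ.2 hσ.2)
        calc |G ρ σ| ≤ a₁ * Real.sqrt (min ρ σ) * |Real.log (max ρ σ)| := hbd
          _ = a₁ * (Real.sqrt (min ρ σ) * |Real.log (max ρ σ)|) := by ring
          _ ≤ a₁ * 2 := mul_le_mul_of_nonneg_left hb ha₁.le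
          _ = 2 * a₁ := by ring
      · have hbd := hG1 hm0 ρ hρ σ hσ
        have hb : (min ρ σ) ^ ((1:ℝ)/2 + m) * (max ρ σ) ^ ((1:ℝ)/2 - m) ≤ 1 :=
          aux_rpow hm (lt_min hρ.1 hσ.1) min_le_max (max_le hρ.2 hσ.2)
        calc |G ρ σ| ≤ a₁ * (min ρ σ) ^ ((1:ℝ)/2 + m) * (max ρ σ) ^ ((1:ℝ)/2 - m) := hbd
          _ = a₁ * ((min ρ σ) ^ ((1:ℝ)/2 + m) * (max ρ σ) ^ ((1:ℝ)/2 - m)) := by ring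
          _ ≤ a₁ * 1 := mul_le_mul_of_nonneg_left hb ha₁.le
          _ ≤ 2 * a₁ := by linarith
    have hvol : volume (Ioc (0:ℝ) 1 ×ˢ Ioc (0:ℝ) 1) < ⊤ :=
      lt_of_le_of_lt (measure_mono (prod_mono Ioc_subset_Icc_self Ioc_subset_Icc_self))
        ((isCompact_Icc.prod isCompact_Icc).measure_lt_top)
    apply Integrable.mono' (g := fun _ : ℝ × ℝ => (B * (2 * a₁))^2)
      (integrableOn_const (hs := hvol.ne) (hC := enorm_ne_top))
      (hfm _ (measurableSet_Ioc.prod measurableSet_Ioc)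
        (fun p hp => ⟨hsub1 hp.1, trivial⟩))
    filter_upwards [ae_restrict_mem (measurableSet_Ioc.prod measurableSet_Ioc)] with p hp
    have h1 : |W p.1 - C₀| ≤ B := hWB p.1 (hsub1 hp.1)
    have h2 : |G p.1 p.2| ≤ 2 * a₁ := hGb _ hp.1 _ hp.2
    have hnorm : ‖f p‖ = (|W p.1 - C₀| * |G p.1 p.2|)^2 := by
      rw [hf]; rw [Real.norm_eq_abs, abs_pow, abs_mul]
    rw [hnorm]
    exact pow_le_pow_left₀ (by positivity)
      (mul_le_mul h1 h2 (abs_nonneg _) hB0) 2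
  -- Region B : (0,1] × (1,∞)
  have hB2 : IntegrableOn f (Ioc (0:ℝ) 1 ×ˢ Ioi (1:ℝ)) := by
    have hgint : IntegrableOn (fun p : ℝ × ℝ => (B * a₂)^2 * (Real.exp (-p.2))^2)
        (Ioc (0:ℝ) 1 ×ˢ Ioi (1:ℝ)) := by
      rw [IntegrableOn, hrestr]
      have hexp : Integrable (fun σ : ℝ => (Real.exp (-σ))^2) (volume.restrict (Ioi 1)) := by
        have heq : (fun σ : ℝ => (Real.exp (-σ))^2) = fun σ : ℝ => Real.exp (-2 * σ) := by
          funext σ; rw [sq, ← Real.exp_add]; congr 1; ring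
        rw [heq]
        exact exp_neg_integrableOn_Ioi 1 two_pos
      exact Integrable.mul_prod
        (integrableOn_const (hs := measure_Ioc_lt_top.ne) (hC := enorm_ne_top) :
          IntegrableOn (fun _ : ℝ => (B * a₂)^2) (Ioc (0:ℝ) 1)) hexp
    apply Integrable.mono' hgint
      (hfm _ (measurableSet_Ioc.prod measurableSet_Ioi)
        (fun p hp => ⟨hsub1 hp.1, trivial⟩))
    filter_upwards [ae_restrict_mem (measurableSet_Ioc.prod measurableSet_Ioi)] with p hp
    have h1 : |W p.1 - C₀| ≤ B := hWB p.1 (hsub1 hp.1)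
    have hr : p.1 ^ ((1:ℝ)/2 + m) ≤ 1 :=
      Real.rpow_le_one (le_of_lt hp.1.1) hp.1.2 (by linarith)
    have h2 : |G p.1 p.2| ≤ a₂ * Real.exp (-p.2) := by
      calc |G p.1 p.2| ≤ a₂ * p.1 ^ ((1:ℝ)/2 + m) * Real.exp (-p.2) := hG2 _ hp.1 _ hp.2
        _ ≤ a₂ * 1 * Real.exp (-p.2) := by
            apply mul_le_mul_of_nonneg_right _ (Real.exp_pos _).le
            exact mul_le_mul_of_nonneg_left hr ha₂.le
        _ = a₂ * Real.exp (-p.2) := by ring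
    have hnorm : ‖f p‖ = (|W p.1 - C₀| * |G p.1 p.2|)^2 := by
      rw [hf]; rw [Real.norm_eq_abs, abs_pow, abs_mul]
    rw [hnorm]
    calc (|W p.1 - C₀| * |G p.1 p.2|)^2 ≤ (B * (a₂ * Real.exp (-p.2)))^2 :=
          pow_le_pow_left₀ (by positivity)
            (mul_le_mul h1 h2 (abs_nonneg _) hB0) 2
      _ = (B * a₂)^2 * (Real.exp (-p.2))^2 := by ring
  -- Region C : (1,∞) × (0,1]
  have hC : IntegrableOn f (Ioi (1:ℝ) ×ˢ Ioc (0:ℝ) 1) := by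
    have hgint : IntegrableOn (fun p : ℝ × ℝ => ((B * a₃)^2 * (Real.exp (-p.1))^2) * 1)
        (Ioi (1:ℝ) ×ˢ Ioc (0:ℝ) 1) := by
      rw [IntegrableOn, hrestr]
      have hexp : Integrable (fun ρ : ℝ => (B * a₃)^2 * (Real.exp (-ρ))^2)
          (volume.restrict (Ioi 1)) := by
        have heq : (fun ρ : ℝ => (B * a₃)^2 * (Real.exp (-ρ))^2)
            = fun ρ : ℝ => (B * a₃)^2 * Real.exp (-2 * ρ) := by
          funext ρ; congr 1; rw [sq, ← Real.exp_add]; congr 1; ring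
        rw [heq]
        exact (exp_neg_integrableOn_Ioi 1 two_pos).const_mul _
      exact Integrable.mul_prod hexp
        (integrableOn_const (hs := measure_Ioc_lt_top.ne) (hC := enorm_ne_top))
    apply Integrable.mono' hgint
      (hfm _ (measurableSet_Ioi.prod measurableSet_Ioc)
        (fun p hp => ⟨hsub2 hp.1, trivial⟩))
    filter_upwards [ae_restrict_mem (measurableSet_Ioi.prod measurableSet_Ioc)] with p hp
    have h1 : |W p.1 - C₀| ≤ B := hWB p.1 (hsub2 hp.1)
    have hr : p.2 ^ ((1:ℝ)/2 + m) ≤ 1 :=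
      Real.rpow_le_one (le_of_lt hp.2.1) hp.2.2 (by linarith)
    have h2 : |G p.1 p.2| ≤ a₃ * Real.exp (-p.1) := by
      calc |G p.1 p.2| ≤ a₃ * Real.exp (-p.1) * p.2 ^ ((1:ℝ)/2 + m) := hG3 _ hp.1 _ hp.2
        _ ≤ a₃ * Real.exp (-p.1) * 1 :=
            mul_le_mul_of_nonneg_left hr (by positivity)
        _ = a₃ * Real.exp (-p.1) := by ring
    have hnorm : ‖f p‖ = (|W p.1 - C₀| * |G p.1 p.2|)^2 := by
      rw [hf]; rw [Real.norm_eq_abs, abs_pow, abs_mul]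
    rw [hnorm]
    calc (|W p.1 - C₀| * |G p.1 p.2|)^2 ≤ (B * (a₃ * Real.exp (-p.1)))^2 :=
          pow_le_pow_left₀ (by positivity)
            (mul_le_mul h1 h2 (abs_nonneg _) hB0) 2
      _ = ((B * a₃)^2 * (Real.exp (-p.1))^2) * 1 := by ring
  -- Region D : (1,∞) × (1,∞)
  have hD : IntegrableOn f (Ioi (1:ℝ) ×ˢ Ioi (1:ℝ)) := by
    set c : ℝ → ℝ := fun ρ => a₄^2 * (W ρ - C₀)^2 with hcdef
    have hc0 : ∀ x, 0 ≤ c x := fun x => by positivity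
    have hcint : IntegrableOn c (Ioi (1:ℝ)) := hWL2.const_mul _
    have hgcont : ContinuousOn (fun p : ℝ × ℝ => c p.1 * Real.exp (-(2*|p.1 - p.2|)))
        (Ici (0:ℝ) ×ˢ (univ : Set ℝ)) := by
      apply ContinuousOn.mul
      · exact continuousOn_const.mul (hWc2.pow 2)
      · apply Continuous.continuousOn
        exact Real.continuous_exp.comp
          (((continuous_const.mul ((continuous_fst.sub continuous_snd).abs))).neg)
    have hgmeas : AEStronglyMeasurable (fun p : ℝ × ℝ => c p.1 * Real.exp (-(2*|p.1 - p.2|)))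
        ((volume.restrict (Ioi 1)).prod (volume.restrict (Ioi 1))) := by
      have h1 := hgcont.aestronglyMeasurable (μ := (volume : Measure (ℝ × ℝ))) (measurableSet_Ici.prod MeasurableSet.univ)
      rw [← hrestr]
      have hsubD : (Ioi (1:ℝ) ×ˢ Ioi (1:ℝ)) ⊆ Ici (0:ℝ) ×ˢ (univ : Set ℝ) :=
        fun p hp => ⟨hsub2 hp.1, trivial⟩
      exact h1.mono_measure (Measure.restrict_mono hsubD le_rfl)
    have hgint : IntegrableOn (fun p : ℝ × ℝ => c p.1 * Real.exp (-(2*|p.1 - p.2|)))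
        (Ioi (1:ℝ) ×ˢ Ioi (1:ℝ)) := by
      rw [IntegrableOn, hrestr]
      exact aux_piece4 hc0 hcint hgmeas
    apply Integrable.mono' hgint
      (hfm _ (measurableSet_Ioi.prod measurableSet_Ioi)
        (fun p hp => ⟨hsub2 hp.1, trivial⟩))
    filter_upwards [ae_restrict_mem (measurableSet_Ioi.prod measurableSet_Ioi)] with p hp
    have h2 : |G p.1 p.2| ≤ a₄ * Real.exp (-|p.1 - p.2|) := hG4 _ hp.1 _ hp.2
    have hnorm : ‖f p‖ = (|W p.1 - C₀| * |G p.1 p.2|)^2 := by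
      rw [hf]; rw [Real.norm_eq_abs, abs_pow, abs_mul]
    rw [hnorm]
    calc (|W p.1 - C₀| * |G p.1 p.2|)^2
        ≤ (|W p.1 - C₀| * (a₄ * Real.exp (-|p.1 - p.2|)))^2 :=
          pow_le_pow_left₀ (by positivity)
            (mul_le_mul_of_nonneg_left h2 (abs_nonneg _)) 2
      _ = c p.1 * Real.exp (-(2*|p.1 - p.2|)) := by
          rw [hcdef]
          rw [mul_pow, mul_pow, sq_abs,
            show (Real.exp (-|p.1 - p.2|))^2 = Real.exp (-(2*|p.1 - p.2|)) by
              rw [sq, ← Real.exp_add]; congr 1; ring]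
          ring
  -- assemble
  have hset : Ioi (0:ℝ) ×ˢ Ioi (0:ℝ)
      = (Ioc (0:ℝ) 1 ×ˢ Ioc (0:ℝ) 1 ∪ Ioc (0:ℝ) 1 ×ˢ Ioi (1:ℝ))
        ∪ (Ioi (1:ℝ) ×ˢ Ioc (0:ℝ) 1 ∪ Ioi (1:ℝ) ×ˢ Ioi (1:ℝ)) := by
    rw [← Ioc_union_Ioi_eq_Ioi (zero_le_one : (0:ℝ) ≤ 1), union_prod, prod_union, prod_union]
  rw [hset]
  exact (hA.union hB2).union (hC.union hD)
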